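/- For every well-formed suspension environment e, there exists a simple environment e' (i.e., one of the form (t₀,l₀)::(t₁,l₁)::…::(t_{n−1},l_{n−1})::nil, with n possibly zero, containing no merged-environment constructors at the top spine) such that e rewrites to e' by a finite sequence of merging rules (m2)–(m6). -/

import Mathlib

mutual
inductive STerm : Type
  | const : ℕ → STerm
  | var   : ℕ → STerm
  | app   : STerm → STerm → STerm
  | lam   : STerm → STerm
  | susp  : STerm → ℕ → ℕ → SEnv → STerm
inductive SEnv : Type
  | nil   : SEnv
  | cons  : STerm → ℕ → SEnv → SEnv
  | merge : SEnv → ℕ → ℕ → SEnv → SEnv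
end

/-- Length of an environment. -/
def SEnv.len : SEnv → ℕ
  | .nil => 0
  | .cons _ _ e => 1 + e.len
  | .merge e1 nl1 ol2 _ => e1.len + (ol2 - nl1)

/-- Level of an environment. -/
def SEnv.lev : SEnv → ℕ
  | .nil => 0
  | .cons _ n _ => n
  | .merge _ nl1 ol2 e2 => e2.lev + (nl1 - ol2)

mutual
/-- Well-formedness of suspension terms. -/
def STerm.wf : STerm → Prop
  | .const _ => True
  | .var _ => True
  | .app t1 t2 => t1.wf ∧ t2.wf
  | .lam t => t.wf
  | .susp t ol nl e => t.wf ∧ e.wf ∧ e.len = ol ∧ e.lev ≤ nl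
/-- Well-formedness of suspension environments. -/
def SEnv.wf : SEnv → Prop
  | .nil => True
  | .cons t n e => t.wf ∧ e.wf ∧ e.lev ≤ n
  | .merge e1 nl1 ol2 e2 => e1.wf ∧ e2.wf ∧ e2.len = ol2 ∧ e1.lev ≤ nl1
end

/-- A simple environment: no merged environments on the top spine. -/
def SEnv.simple : SEnv → Prop
  | .nil => True
  | .cons _ _ e => e.simple
  | .merge _ _ _ _ => False

mutual
/-- Compatible closure of the merging rules (m2)-(m6) (term side: only congruences). -/
inductive MStepT : STerm → STerm → Prop
  | appL : ∀ (t1 t1' t2 : STerm), MStepT t1 t1' → MStepT (.app t1 t2) (.app t1' t2)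
  | appR : ∀ (t1 t2 t2' : STerm), MStepT t2 t2' → MStepT (.app t1 t2) (.app t1 t2')
  | lamC : ∀ (t t' : STerm), MStepT t t' → MStepT (.lam t) (.lam t')
  | suspT : ∀ (t t' : STerm) (ol nl : ℕ) (e : SEnv),
      MStepT t t' → MStepT (.susp t ol nl e) (.susp t' ol nl e)
  | suspE : ∀ (t : STerm) (ol nl : ℕ) (e e' : SEnv),
      MStepE e e' → MStepT (.susp t ol nl e) (.susp t ol nl e')
/-- One step using a merging rule (m2)-(m6) anywhere. -/
inductive MStepE : SEnv → SEnv → Prop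
  | m2 : ∀ (e1 : SEnv) (nl1 : ℕ), MStepE (.merge e1 nl1 0 .nil) e1
  | m3 : ∀ (ol2 : ℕ) (e2 : SEnv), MStepE (.merge .nil 0 ol2 e2) e2
  | m4 : ∀ (nl1 ol2 : ℕ) (t : STerm) (l : ℕ) (e2 : SEnv), 1 ≤ nl1 →
      MStepE (.merge .nil nl1 ol2 (.cons t l e2)) (.merge .nil (nl1 - 1) (ol2 - 1) e2)
  | m5 : ∀ (t : STerm) (n : ℕ) (e1 : SEnv) (nl1 ol2 : ℕ) (s : STerm) (l : ℕ) (e2 : SEnv),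
      n < nl1 →
      MStepE (.merge (.cons t n e1) nl1 ol2 (.cons s l e2))
             (.merge (.cons t n e1) (nl1 - 1) (ol2 - 1) e2)
  | m6 : ∀ (t : STerm) (n : ℕ) (e1 : SEnv) (ol2 : ℕ) (s : STerm) (l : ℕ) (e2 : SEnv),
      MStepE (.merge (.cons t n e1) n ol2 (.cons s l e2))
             (.cons (.susp t ol2 l (.cons s l e2)) (l + (n - ol2))
                    (.merge e1 n ol2 (.cons s l e2)))
  | consT : ∀ (t t' : STerm) (n : ℕ) (e : SEnv),
      MStepT t t' → MStepE (.cons t n e) (.cons t' n e)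
  | consE : ∀ (t : STerm) (n : ℕ) (e e' : SEnv),
      MStepE e e' → MStepE (.cons t n e) (.cons t n e')
  | mergeL : ∀ (e1 e1' : SEnv) (nl1 ol2 : ℕ) (e2 : SEnv),
      MStepE e1 e1' → MStepE (.merge e1 nl1 ol2 e2) (.merge e1' nl1 ol2 e2)
  | mergeR : ∀ (e1 : SEnv) (nl1 ol2 : ℕ) (e2 e2' : SEnv),
      MStepE e2 e2' → MStepE (.merge e1 nl1 ol2 e2) (.merge e1 nl1 ol2 e2')
end

lemma liftCons (t : STerm) (n : ℕ) {e e' : SEnv}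
    (h : Relation.ReflTransGen MStepE e e') :
    Relation.ReflTransGen MStepE (.cons t n e) (.cons t n e') :=
  Relation.ReflTransGen.lift (fun x => SEnv.cons t n x)
    (fun _ _ hs => MStepE.consE _ _ _ _ hs) _ _ h

lemma liftMergeL (nl1 ol2 : ℕ) (e2 : SEnv) {e1 e1' : SEnv}
    (h : Relation.ReflTransGen MStepE e1 e1') :
    Relation.ReflTransGen MStepE (.merge e1 nl1 ol2 e2) (.merge e1' nl1 ol2 e2) :=
  Relation.ReflTransGen.lift (fun x => SEnv.merge x nl1 ol2 e2)
    (fun _ _ hs => MStepE.mergeL _ _ _ _ _ hs) _ _ h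

lemma liftMergeR (e1 : SEnv) (nl1 ol2 : ℕ) {e2 e2' : SEnv}
    (h : Relation.ReflTransGen MStepE e2 e2') :
    Relation.ReflTransGen MStepE (.merge e1 nl1 ol2 e2) (.merge e1 nl1 ol2 e2') :=
  Relation.ReflTransGen.lift (fun x => SEnv.merge e1 nl1 ol2 x)
    (fun _ _ hs => MStepE.mergeR _ _ _ _ _ hs) _ _ h

lemma mergeSimple (ol2 : ℕ) (e1 : SEnv) (nl1 : ℕ) (e2 : SEnv)
    (hs1 : e1.simple) (hw1 : e1.wf) (hs2 : e2.simple) (hw2 : e2.wf)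
    (hlen : e2.len = ol2) (hlev : e1.lev ≤ nl1) :
    ∃ e' : SEnv, e'.simple ∧ e'.wf ∧ e'.len = e1.len + (ol2 - nl1) ∧
      e'.lev ≤ e2.lev + (nl1 - ol2) ∧
      Relation.ReflTransGen MStepE (.merge e1 nl1 ol2 e2) e' := by
  match e1, hs1, hw1 with
  | .merge _ _ _ _, hs1, _ => exact absurd hs1 (by simp [SEnv.simple])
  | .nil, _, _ =>
    match ol2, hlen with
    | 0, hlen =>
      match e2, hs2, hlen with
      | .nil, _, _ =>
        exact ⟨.nil, trivial, trivial, by simp [SEnv.len], by simp [SEnv.lev],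
          Relation.ReflTransGen.single (MStepE.m2 _ _)⟩
      | .cons t l e, _, hlen => simp [SEnv.len] at hlen
    | (ol2' + 1), hlen =>
      match e2, hs2, hw2, hlen with
      | .cons s l e2', hs2, hw2, hlen =>
        have hw2' : s.wf ∧ e2'.wf ∧ e2'.lev ≤ l := hw2
        have hlen2 : e2'.len = ol2' := by
          simp [SEnv.len] at hlen; omega
        match nl1 with
        | 0 =>
          exact ⟨.cons s l e2', hs2, hw2, by simp [SEnv.len]; omega, by
            simp [SEnv.lev], Relation.ReflTransGen.single (MStepE.m3 _ _)⟩
        | (k + 1) =>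
          obtain ⟨e', hs', hw', hl', hv', hr'⟩ :=
            mergeSimple ol2' .nil k e2' trivial trivial hs2 hw2'.2.1 hlen2
              (by simp [SEnv.lev])
          refine ⟨e', hs', hw', ?_, ?_, ?_⟩
          · simp [SEnv.len] at hl' ⊢; omega
          · simp [SEnv.lev] at hv' ⊢
            have := hw2'.2.2; omega
          · exact Relation.ReflTransGen.head
              (MStepE.m4 (k+1) (ol2'+1) s l e2' (by omega)) (by simpa using hr')
  | .cons t n e1, hs1, hw1 =>
    have hw1' : t.wf ∧ e1.wf ∧ e1.lev ≤ n := hw1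
    have hlevn : n ≤ nl1 := by simpa [SEnv.lev] using hlev
    match ol2, hlen with
    | 0, hlen =>
      match e2, hs2, hlen with
      | .nil, _, _ =>
        exact ⟨.cons t n e1, hs1, hw1, by simp [SEnv.len], by
          simp [SEnv.lev]; omega,
          Relation.ReflTransGen.single (MStepE.m2 _ _)⟩
      | .cons s l e, _, hlen => simp [SEnv.len] at hlen
    | (ol2' + 1), hlen =>
      match e2, hs2, hw2, hlen with
      | .cons s l e2', hs2, hw2, hlen =>
        have hw2' : s.wf ∧ e2'.wf ∧ e2'.lev ≤ l := hw2
        have hlen2 : e2'.len = ol2' := by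
          simp [SEnv.len] at hlen; omega
        rcases lt_or_eq_of_le hlevn with hlt | heq
        · -- m5 case
          obtain ⟨e', hs', hw', hl', hv', hr'⟩ :=
            mergeSimple ol2' (.cons t n e1) (nl1 - 1) e2' hs1 hw1 hs2
              hw2'.2.1 hlen2 (by simp [SEnv.lev]; omega)
          refine ⟨e', hs', hw', ?_, ?_, ?_⟩
          · simp [SEnv.len] at hl' ⊢; omega
          · simp [SEnv.lev] at hv' ⊢
            have := hw2'.2.2; omega
          · exact Relation.ReflTransGen.head
              (MStepE.m5 t n e1 nl1 (ol2'+1) s l e2' hlt) (by simpa using hr')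
        · -- m6 case, n = nl1
          subst heq
          obtain ⟨f, hsf, hwf', hlf, hvf, hrf⟩ :=
            mergeSimple (ol2'+1) e1 n (.cons s l e2') hs1 hw1'.2.1 hs2 hw2 hlen
              hw1'.2.2
          refine ⟨.cons (.susp t (ol2'+1) l (.cons s l e2')) (l + (n - (ol2'+1))) f,
            hsf, ?_, ?_, ?_, ?_⟩
          · refine ⟨⟨hw1'.1, hw2, hlen, le_refl l⟩, hwf', ?_⟩
            simp [SEnv.lev] at hvf ⊢; omega
          · simp [SEnv.len] at hlf ⊢; omega
          · simp [SEnv.lev]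
          · exact Relation.ReflTransGen.head
              (MStepE.m6 t n e1 (ol2'+1) s l e2')
              (liftCons _ _ hrf)
termination_by (ol2, sizeOf e1)

lemma stmt2Strong (e : SEnv) (hw : e.wf) :
    ∃ e' : SEnv, e'.simple ∧ e'.wf ∧ e'.len = e.len ∧ e'.lev ≤ e.lev ∧
      Relation.ReflTransGen MStepE e e' := by
  match e, hw with
  | .nil, _ => exact ⟨.nil, trivial, trivial, rfl, le_refl _, .refl⟩
  | .cons t n e, hw =>
    have hw' : t.wf ∧ e.wf ∧ e.lev ≤ n := hw
    obtain ⟨e', hs', hwe', hl', hv', hr'⟩ := stmt2Strong e hw'.2.1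
    exact ⟨.cons t n e', hs', ⟨hw'.1, hwe', le_trans hv' hw'.2.2⟩,
      by simp [SEnv.len, hl'], by simp [SEnv.lev], liftCons t n hr'⟩
  | .merge e1 nl1 ol2 e2, hw =>
    have hw' : e1.wf ∧ e2.wf ∧ e2.len = ol2 ∧ e1.lev ≤ nl1 := hw
    obtain ⟨e1', hs1, hw1, hl1, hv1, hr1⟩ := stmt2Strong e1 hw'.1
    obtain ⟨e2', hs2, hw2, hl2, hv2, hr2⟩ := stmt2Strong e2 hw'.2.1
    obtain ⟨e', hs', hwe', hl', hv', hr'⟩ :=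
      mergeSimple ol2 e1' nl1 e2' hs1 hw1 hs2 hw2 (hl2.trans hw'.2.2.1)
        (le_trans hv1 hw'.2.2.2)
    refine ⟨e', hs', hwe', by simp [SEnv.len, hl', hl1], by
      simp [SEnv.lev] at hv' ⊢; omega, ?_⟩
    exact ((liftMergeL nl1 ol2 e2 hr1).trans (liftMergeR e1' nl1 ol2 hr2)).trans hr'
termination_by sizeOf e

/-- every well-formed environment rewrites by the merging rules
(m2)-(m6) to a simple environment. -/
theorem stmt2 (e : SEnv) (hwf : e.wf) :
    ∃ e' : SEnv, e'.simple ∧ Relation.ReflTransGen MStepE e e' := by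
  obtain ⟨e', hs, _, _, _, hr⟩ := stmt2Strong e hwf
  exact ⟨e', hs, hr⟩
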